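/- Let B, X be L-algebras such that B operates on X via (b, x) ↦ bx. Then the semidirect product X ⋊ B, defined as the cartesian product X × B equipped with the operation (x, b) → (y, b') = (((b → b')x) → ((b' → b)y), b → b') and unit (1, 1), is an L-algebra. -/
import Mathlib


/-- An L-algebra: an algebra `(L, →, 1)` with `1 → x = x`, `x → x = 1`, `x → 1 = 1`,
`(x → y) → (x → z) = (y → x) → (y → z)`, and antisymmetry:
`x → y = 1` and `y → x = 1` imply `x = y`. -/
class LAlgebra (α : Type*) extends One α, HImp α where
  one_himp : ∀ x : α, (1 : α) ⇨ x = x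
  himp_self : ∀ x : α, x ⇨ x = 1
  himp_one : ∀ x : α, x ⇨ (1 : α) = 1
  cycloid : ∀ x y z : α, (x ⇨ y) ⇨ (x ⇨ z) = (y ⇨ x) ⇨ (y ⇨ z)
  antisymm : ∀ x y : α, x ⇨ y = 1 → y ⇨ x = 1 → x = y

/-- The implication `(x,b) → (y,b') := (((b → b')x) → ((b' → b)y), b → b')` of Rump's
semidirect product `X ⋊ B` of L-algebras, where `B` operates on `X` via `act`. -/
def Limp {B X : Type*} [LAlgebra B] [LAlgebra X] (act : B → X → X)
    (q r : X × B) : X × B :=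
  (act (q.2 ⇨ r.2) q.1 ⇨ act (r.2 ⇨ q.2) r.1, q.2 ⇨ r.2)

/-- If the L-algebra `B` operates on the L-algebra `X`, then the semidirect product
`X ⋊ B`, i.e. `X × B` with `(x,b) → (y,b') = (((b → b')x) → ((b' → b)y), b → b')`
and unit `(1,1)`, is an L-algebra. -/
theorem stmt17 {B X : Type*} [LAlgebra B] [LAlgebra X] (act : B → X → X)
    (O1 : ∀ (b : B) (x y : X), act b (x ⇨ y) = act b x ⇨ act b y)
    (O2 : ∀ (b b' : B) (x : X), act (b ⇨ b') (act b x) = act (b' ⇨ b) (act b' x))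
    (O3 : ∀ x : X, act 1 x = x) :
    (∀ q : X × B, Limp act ((1 : X), (1 : B)) q = q) ∧
    (∀ q : X × B, Limp act q q = ((1 : X), (1 : B))) ∧
    (∀ q : X × B, Limp act q ((1 : X), (1 : B)) = ((1 : X), (1 : B))) ∧
    (∀ q r t : X × B,
      Limp act (Limp act q r) (Limp act q t)
        = Limp act (Limp act r q) (Limp act r t)) ∧
    (∀ q r : X × B, Limp act q r = ((1 : X), (1 : B)) →
      Limp act r q = ((1 : X), (1 : B)) → q = r) := by
  have hact1 : ∀ b : B, act b (1 : X) = 1 := by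
    intro b
    have h := O1 b 1 1
    rw [LAlgebra.himp_self] at h
    rw [h, LAlgebra.himp_self]
  refine ⟨?_, ?_, ?_, ?_, ?_⟩
  · rintro ⟨x, b⟩
    simp [Limp, LAlgebra.one_himp, LAlgebra.himp_one, hact1, O3]
  · rintro ⟨x, b⟩
    simp [Limp, LAlgebra.himp_self, O3]
  · rintro ⟨x, b⟩
    simp [Limp, LAlgebra.one_himp, LAlgebra.himp_one, hact1, O3]
  · rintro ⟨x, b⟩ ⟨y, c⟩ ⟨z, d⟩
    simp only [Limp, O1]
    have hE : (c ⇨ b) ⇨ (c ⇨ d) = (b ⇨ c) ⇨ (b ⇨ d) := (LAlgebra.cycloid b c d).symm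
    have hA3 : act ((b ⇨ d) ⇨ (b ⇨ c)) (act (b ⇨ d) x)
        = act ((b ⇨ c) ⇨ (b ⇨ d)) (act (b ⇨ c) x) := O2 (b ⇨ d) (b ⇨ c) x
    have hB3 : act ((c ⇨ d) ⇨ (c ⇨ b)) (act (c ⇨ d) y)
        = act ((c ⇨ b) ⇨ (c ⇨ d)) (act (c ⇨ b) y) := O2 (c ⇨ d) (c ⇨ b) y
    have hA4 : act ((b ⇨ d) ⇨ (b ⇨ c)) (act (d ⇨ b) z)
        = act ((c ⇨ d) ⇨ (c ⇨ b)) (act (d ⇨ c) z) := by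
      have h := O2 (d ⇨ b) (d ⇨ c) z
      rwa [LAlgebra.cycloid d b c, LAlgebra.cycloid d c b] at h
    rw [Prod.mk.injEq]
    constructor
    · rw [hA3, hB3, hE, hA4]
      exact LAlgebra.cycloid _ _ _
    · exact LAlgebra.cycloid b c d
  · rintro ⟨x, b⟩ ⟨y, c⟩ h1 h2
    simp only [Limp, Prod.mk.injEq] at h1 h2
    have hb : b = c := LAlgebra.antisymm b c h1.2 h2.2
    subst hb
    rw [LAlgebra.himp_self, O3, O3] at h1 h2
    rw [LAlgebra.antisymm x y h1.1 h2.1]
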